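/- arXiv:2604.11526 — 3 statements merged into one kernel-verified Lean document; each statement's English description precedes it below -/
import Mathlib

section
/- The function f_s is strictly decreasing on the interval (−∞, π²): for all Λ₁ < Λ₂ < π² one has f_s(Λ₁) > f_s(Λ₂). -/
/-- Symmetric eigenvalue branch of the Dirichlet-to-Neumann map of the unit interval. -/
noncomputable def fs (Λ : ℝ) : ℝ :=
  if Λ < 0 then Real.sqrt (-Λ) * Real.tanh (Real.sqrt (-Λ) / 2)
  else if Λ = 0 then 0
  else -Real.sqrt Λ * Real.tan (Real.sqrt Λ / 2)

/-- Antisymmetric eigenvalue branch of the Dirichlet-to-Neumann map of the unit interval. -/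
noncomputable def fa (Λ : ℝ) : ℝ :=
  if Λ < 0 then
    Real.sqrt (-Λ) * Real.cosh (Real.sqrt (-Λ) / 2) / Real.sinh (Real.sqrt (-Λ) / 2)
  else if Λ = 0 then 2
  else Real.sqrt Λ * Real.cos (Real.sqrt Λ / 2) / Real.sin (Real.sqrt Λ / 2)

lemma tanh_lt_tanh' {a b : ℝ} (h : a < b) : Real.tanh a < Real.tanh b := by
  rw [Real.tanh_eq_sinh_div_cosh, Real.tanh_eq_sinh_div_cosh,
    div_lt_div_iff₀ (Real.cosh_pos _) (Real.cosh_pos _)]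
  have : 0 < Real.sinh (b - a) := Real.sinh_pos_iff.2 (by linarith)
  rw [Real.sinh_sub] at this
  linarith

lemma tanh_pos' {a : ℝ} (h : 0 < a) : 0 < Real.tanh a := by
  simpa using tanh_lt_tanh' h

/-- The symmetric Dirichlet-to-Neumann eigenvalue branch `fs` of the unit interval is
strictly decreasing on `(-∞, π²)`, its first interval of continuity. -/
theorem stmt4 (Λ₁ Λ₂ : ℝ) (h12 : Λ₁ < Λ₂) (h2 : Λ₂ < Real.pi ^ 2) :
    fs Λ₁ > fs Λ₂ := by
  have pi_pos := Real.pi_pos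
  -- helper facts
  have hneg : ∀ Λ : ℝ, Λ < 0 → 0 < fs Λ := by
    intro Λ hΛ
    rw [fs, if_pos hΛ]
    have hx : 0 < Real.sqrt (-Λ) := Real.sqrt_pos.2 (by linarith)
    exact mul_pos hx (tanh_pos' (by linarith))
  have hposneg : ∀ Λ : ℝ, 0 < Λ → Λ < Real.pi ^ 2 → fs Λ < 0 := by
    intro Λ h0 hπ
    have hne : ¬ Λ < 0 := by linarith
    rw [fs, if_neg hne, if_neg (by linarith)]
    have hx : 0 < Real.sqrt Λ := Real.sqrt_pos.2 h0
    have hxπ : Real.sqrt Λ < Real.pi := by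
      have := Real.sqrt_lt_sqrt (by positivity) hπ
      rwa [Real.sqrt_sq pi_pos.le] at this
    have htan : 0 < Real.tan (Real.sqrt Λ / 2) :=
      Real.tan_pos_of_pos_of_lt_pi_div_two (by linarith) (by linarith)
    nlinarith
  rcases lt_trichotomy Λ₂ 0 with h2n | h2z | h2p
  · -- both negative
    have h1n : Λ₁ < 0 := by linarith
    rw [fs, fs, if_pos h1n, if_pos h2n]
    have hx2 : 0 < Real.sqrt (-Λ₂) := Real.sqrt_pos.2 (by linarith)
    have hlt : Real.sqrt (-Λ₂) < Real.sqrt (-Λ₁) :=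
      Real.sqrt_lt_sqrt (by linarith) (by linarith)
    have ht2 : 0 < Real.tanh (Real.sqrt (-Λ₂) / 2) := tanh_pos' (by linarith)
    have ht : Real.tanh (Real.sqrt (-Λ₂) / 2) < Real.tanh (Real.sqrt (-Λ₁) / 2) :=
      tanh_lt_tanh' (by linarith)
    nlinarith
  · subst h2z
    have : fs 0 = 0 := by rw [fs]; simp
    rw [this]
    exact hneg _ h12
  · -- Λ₂ positive
    have h2' := hposneg Λ₂ h2p h2
    rcases lt_trichotomy Λ₁ 0 with h1n | h1z | h1p
    · exact lt_trans h2' (hneg _ h1n)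
    · subst h1z
      have : fs 0 = 0 := by rw [fs]; simp
      rw [this]; exact h2'
    · -- both positive
      have h1' : Λ₁ < Real.pi ^ 2 := by linarith
      rw [fs, fs, if_neg (by linarith), if_neg (by linarith),
        if_neg (by linarith), if_neg (by linarith)]
      have hx1 : 0 < Real.sqrt Λ₁ := Real.sqrt_pos.2 h1p
      have hlt : Real.sqrt Λ₁ < Real.sqrt Λ₂ := Real.sqrt_lt_sqrt (le_of_lt h1p) h12
      have hx2π : Real.sqrt Λ₂ < Real.pi := by
        have := Real.sqrt_lt_sqrt (by positivity) h2
        rwa [Real.sqrt_sq pi_pos.le] at this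
      have ht1 : 0 < Real.tan (Real.sqrt Λ₁ / 2) :=
        Real.tan_pos_of_pos_of_lt_pi_div_two (by linarith) (by linarith)
      have ht : Real.tan (Real.sqrt Λ₁ / 2) < Real.tan (Real.sqrt Λ₂ / 2) :=
        Real.tan_lt_tan_of_nonneg_of_lt_pi_div_two (by positivity) (by linarith) (by linarith)
      nlinarith
end

section
/- The function f_a is strictly decreasing on the interval (−∞, 4π²): for all Λ₁ < Λ₂ < 4π² one has f_a(Λ₁) > f_a(Λ₂). -/
open Real Set

lemma aux_mono : StrictMonoOn (fun t : ℝ => t * Real.cosh t / Real.sinh t) (Set.Ioi 0) := by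
  apply strictMonoOn_of_deriv_pos (convex_Ioi 0)
  · apply ContinuousOn.div
    · fun_prop
    · fun_prop
    · intro t ht
      exact ne_of_gt (Real.sinh_pos_iff.2 ht)
  · intro t ht
    rw [interior_Ioi] at ht
    have ht0 : (0:ℝ) < t := ht
    have hs : Real.sinh t ≠ 0 := ne_of_gt (Real.sinh_pos_iff.2 ht0)
    have hd : HasDerivAt (fun t : ℝ => t * Real.cosh t / Real.sinh t)
        (((1 * Real.cosh t + t * Real.sinh t) * Real.sinh t -
          t * Real.cosh t * Real.cosh t) / Real.sinh t ^ 2) t := by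
      exact ((hasDerivAt_id t).mul (Real.hasDerivAt_cosh t)).div (Real.hasDerivAt_sinh t) hs
    rw [hd.deriv]
    apply div_pos
    · have h1 : t < Real.sinh t := Real.self_lt_sinh_iff.2 ht0
      have h2 : (1:ℝ) ≤ Real.cosh t := Real.one_le_cosh t
      have h3 : Real.cosh t ^ 2 - Real.sinh t ^ 2 = 1 := Real.cosh_sq_sub_sinh_sq t
      nlinarith
    · positivity

lemma aux_anti : StrictAntiOn (fun s : ℝ => s * Real.cos s / Real.sin s) (Set.Ioo 0 Real.pi) := by
  apply strictAntiOn_of_deriv_neg (convex_Ioo 0 Real.pi)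
  · apply ContinuousOn.div
    · fun_prop
    · fun_prop
    · intro s hs
      exact ne_of_gt (Real.sin_pos_of_pos_of_lt_pi hs.1 hs.2)
  · intro s hs
    rw [interior_Ioo] at hs
    have hsin : 0 < Real.sin s := Real.sin_pos_of_pos_of_lt_pi hs.1 hs.2
    have hd : HasDerivAt (fun s : ℝ => s * Real.cos s / Real.sin s)
        (((1 * Real.cos s + s * (-Real.sin s)) * Real.sin s -
          s * Real.cos s * Real.cos s) / Real.sin s ^ 2) s := by
      exact ((hasDerivAt_id s).mul (Real.hasDerivAt_cos s)).div (Real.hasDerivAt_sin s)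
        (ne_of_gt hsin)
    rw [hd.deriv]
    apply div_neg_of_neg_of_pos
    · have h1 : Real.sin (2 * s) < 2 * s := Real.sin_lt (by linarith [hs.1])
      rw [Real.sin_two_mul] at h1
      have h3 : Real.sin s ^ 2 + Real.cos s ^ 2 = 1 := Real.sin_sq_add_cos_sq s
      have key : (1 * Real.cos s + s * -Real.sin s) * Real.sin s - s * Real.cos s * Real.cos s
          = Real.sin s * Real.cos s - s := by linear_combination (-s) * h3
      rw [key]; linarith
    · positivity

lemma sinh_lt_mul_cosh {t : ℝ} (ht : 0 < t) : Real.sinh t < t * Real.cosh t := by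
  have hmono : StrictMonoOn (fun t : ℝ => t * Real.cosh t - Real.sinh t) (Set.Ici 0) := by
    apply strictMonoOn_of_deriv_pos (convex_Ici 0)
    · fun_prop
    · intro x hx
      rw [interior_Ici] at hx
      have hd : HasDerivAt (fun t : ℝ => t * Real.cosh t - Real.sinh t)
          ((1 * Real.cosh x + x * Real.sinh x) - Real.cosh x) x :=
        ((hasDerivAt_id x).mul (Real.hasDerivAt_cosh x)).sub (Real.hasDerivAt_sinh x)
      rw [hd.deriv]
      have : 0 < Real.sinh x := Real.sinh_pos_iff.2 hx
      have hx0 : (0:ℝ) < x := hx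
      nlinarith
  have := hmono (Set.self_mem_Ici) (Set.mem_Ici.2 ht.le) ht
  simp only [Real.cosh_zero, Real.sinh_zero, mul_zero, zero_mul, sub_zero] at this
  linarith

lemma aux_gt_one {t : ℝ} (ht : 0 < t) : 1 < t * Real.cosh t / Real.sinh t := by
  have hs : 0 < Real.sinh t := Real.sinh_pos_iff.2 ht
  rw [lt_div_iff₀ hs, one_mul]
  exact sinh_lt_mul_cosh ht

lemma aux_lt_one {s : ℝ} (hs : s ∈ Set.Ioo 0 Real.pi) : s * Real.cos s / Real.sin s < 1 := by
  have hsin : 0 < Real.sin s := Real.sin_pos_of_pos_of_lt_pi hs.1 hs.2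
  rw [div_lt_one hsin]
  rcases le_or_gt (Real.cos s) 0 with h | h
  · nlinarith [hs.1]
  · have hlt : s < Real.pi / 2 := by
      by_contra hle
      push_neg at hle
      exact absurd (Real.cos_nonpos_of_pi_div_two_le_of_le hle (by linarith [hs.2, Real.pi_pos]))
        (not_le.2 h)
    have := Real.lt_tan hs.1 hlt
    rw [Real.tan_eq_sin_div_cos, lt_div_iff₀ h] at this
    linarith

lemma fa_neg {Λ : ℝ} (h : Λ < 0) :
    fa Λ = 2 * (Real.sqrt (-Λ) / 2 * Real.cosh (Real.sqrt (-Λ) / 2) / Real.sinh (Real.sqrt (-Λ) / 2)) := by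
  rw [fa, if_pos h]; ring

lemma fa_pos {Λ : ℝ} (h : 0 < Λ) :
    fa Λ = 2 * (Real.sqrt Λ / 2 * Real.cos (Real.sqrt Λ / 2) / Real.sin (Real.sqrt Λ / 2)) := by
  rw [fa, if_neg (not_lt.2 h.le), if_neg (ne_of_gt h)]; ring

lemma fa_gt_two {Λ : ℝ} (h : Λ < 0) : 2 < fa Λ := by
  have ht : 0 < Real.sqrt (-Λ) / 2 := by
    have : 0 < Real.sqrt (-Λ) := Real.sqrt_pos.2 (by linarith)
    linarith
  rw [fa_neg h]
  linarith [aux_gt_one ht]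

lemma fa_lt_two {Λ : ℝ} (h : 0 < Λ) (h2 : Λ < 4 * Real.pi ^ 2) : fa Λ < 2 := by
  have hs : Real.sqrt Λ / 2 ∈ Set.Ioo 0 Real.pi := by
    constructor
    · have : 0 < Real.sqrt Λ := Real.sqrt_pos.2 h
      linarith
    · have : Real.sqrt Λ < 2 * Real.pi := by
        rw [show (2 * Real.pi) = Real.sqrt ((2 * Real.pi) ^ 2) from
          (Real.sqrt_sq (by positivity)).symm]
        apply Real.sqrt_lt_sqrt h.le
        nlinarith
      linarith
  rw [fa_pos h]
  linarith [aux_lt_one hs]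

/-- The antisymmetric Dirichlet-to-Neumann eigenvalue branch `fa` of the unit interval is
strictly decreasing on `(-∞, 4π²)`, its first interval of continuity. -/
theorem stmt5 (Λ₁ Λ₂ : ℝ) (h12 : Λ₁ < Λ₂) (h2 : Λ₂ < 4 * Real.pi ^ 2) :
    fa Λ₁ > fa Λ₂ := by
  rcases lt_trichotomy Λ₂ 0 with h2n | h2z | h2p
  · -- both negative
    have h1n : Λ₁ < 0 := h12.trans h2n
    have ht1 : 0 < Real.sqrt (-Λ₁) / 2 := by
      have : 0 < Real.sqrt (-Λ₁) := Real.sqrt_pos.2 (by linarith)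
      linarith
    have ht2 : 0 < Real.sqrt (-Λ₂) / 2 := by
      have : 0 < Real.sqrt (-Λ₂) := Real.sqrt_pos.2 (by linarith)
      linarith
    have hlt : Real.sqrt (-Λ₂) / 2 < Real.sqrt (-Λ₁) / 2 := by
      have : Real.sqrt (-Λ₂) < Real.sqrt (-Λ₁) :=
        Real.sqrt_lt_sqrt (by linarith) (by linarith)
      linarith
    rw [fa_neg h1n, fa_neg h2n]
    have := aux_mono (Set.mem_Ioi.2 ht2) (Set.mem_Ioi.2 ht1) hlt
    simp only at this
    linarith
  · subst h2z
    rw [show fa 0 = 2 by rw [fa]; norm_num]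
    exact fa_gt_two h12
  · rcases lt_trichotomy Λ₁ 0 with h1n | h1z | h1p
    · exact lt_trans (fa_lt_two h2p h2) (fa_gt_two h1n)
    · subst h1z
      rw [show fa 0 = 2 by rw [fa]; norm_num]
      exact fa_lt_two h2p h2
    · -- both positive
      have hs1 : Real.sqrt Λ₁ / 2 ∈ Set.Ioo 0 Real.pi := by
        constructor
        · have : 0 < Real.sqrt Λ₁ := Real.sqrt_pos.2 h1p
          linarith
        · have : Real.sqrt Λ₁ < 2 * Real.pi := by
            rw [show (2 * Real.pi) = Real.sqrt ((2 * Real.pi) ^ 2) from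
              (Real.sqrt_sq (by positivity)).symm]
            apply Real.sqrt_lt_sqrt h1p.le
            nlinarith
          linarith
      have hs2 : Real.sqrt Λ₂ / 2 ∈ Set.Ioo 0 Real.pi := by
        constructor
        · have : 0 < Real.sqrt Λ₂ := Real.sqrt_pos.2 h2p
          linarith
        · have : Real.sqrt Λ₂ < 2 * Real.pi := by
            rw [show (2 * Real.pi) = Real.sqrt ((2 * Real.pi) ^ 2) from
              (Real.sqrt_sq (by positivity)).symm]
            apply Real.sqrt_lt_sqrt h2p.le
            nlinarith
          linarith
      have hlt : Real.sqrt Λ₁ / 2 < Real.sqrt Λ₂ / 2 := by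
        have : Real.sqrt Λ₁ < Real.sqrt Λ₂ := Real.sqrt_lt_sqrt h1p.le h12
        linarith
      rw [fa_pos h1p, fa_pos h2p]
      have := aux_anti hs1 hs2 hlt
      simp only at this
      linarith
end

section
/- The function f_s is concave on the interval (−∞, π²): for all Λ₁, Λ₂ < π² and all t ∈ [0, 1], f_s(t·Λ₁ + (1−t)·Λ₂) ≥ t·f_s(Λ₁) + (1−t)·f_s(Λ₂). -/
noncomputable def FL (x : ℝ) : ℝ :=
  Real.sqrt (-x) * Real.sinh (Real.sqrt (-x) / 2) / Real.cosh (Real.sqrt (-x) / 2)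

noncomputable def FL' (x : ℝ) : ℝ :=
  -((2 * (Real.sinh (Real.sqrt (-x) / 2) * Real.cosh (Real.sqrt (-x) / 2)) + Real.sqrt (-x)) /
    (4 * (Real.sqrt (-x) * Real.cosh (Real.sqrt (-x) / 2) ^ 2)))

noncomputable def FL2 (x : ℝ) : ℝ :=
  -((2 * (Real.sinh (Real.sqrt (-x) / 2) * Real.cosh (Real.sqrt (-x) / 2) ^ 2)
      - Real.sqrt (-x) * Real.cosh (Real.sqrt (-x) / 2)
      + Real.sqrt (-x) ^ 2 * Real.sinh (Real.sqrt (-x) / 2)) /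
    (8 * (Real.sqrt (-x) ^ 3 * Real.cosh (Real.sqrt (-x) / 2) ^ 3)))

lemma hasDerivAt_sqrt_neg {x : ℝ} (hx : x < 0) :
    HasDerivAt (fun y : ℝ => Real.sqrt (-y)) (1 / (2 * Real.sqrt (-x)) * (-1)) x := by
  have h1 : HasDerivAt (fun y : ℝ => -y) (-1) x := (hasDerivAt_id x).neg
  simpa [Function.comp_def] using (Real.hasDerivAt_sqrt (by linarith : -x ≠ 0)).comp x h1

lemma hasDerivAt_FL {x : ℝ} (hx : x < 0) : HasDerivAt FL (FL' x) x := by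
  have hu0 : 0 < Real.sqrt (-x) := Real.sqrt_pos.2 (by linarith)
  have hC0 : 0 < Real.cosh (Real.sqrt (-x) / 2) := Real.cosh_pos _
  have hu := hasDerivAt_sqrt_neg hx
  have hS : HasDerivAt (fun y : ℝ => Real.sinh (Real.sqrt (-y) / 2))
      (Real.cosh (Real.sqrt (-x) / 2) * (1 / (2 * Real.sqrt (-x)) * (-1) / 2)) x :=
    (hu.div_const 2).sinh
  have hC : HasDerivAt (fun y : ℝ => Real.cosh (Real.sqrt (-y) / 2))
      (Real.sinh (Real.sqrt (-x) / 2) * (1 / (2 * Real.sqrt (-x)) * (-1) / 2)) x :=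
    (hu.div_const 2).cosh
  have hF := (hu.mul hS).div hC hC0.ne'
  have hF' : HasDerivAt FL _ x := hF
  convert hF' using 1
  have hid := Real.cosh_sq (Real.sqrt (-x) / 2)
  rw [FL']
  simp only [Pi.mul_apply]
  field_simp
  linear_combination (4 * Real.sqrt (-x)) * hid

lemma hasDerivAt_FL' {x : ℝ} (hx : x < 0) : HasDerivAt FL' (FL2 x) x := by
  have hu0 : 0 < Real.sqrt (-x) := Real.sqrt_pos.2 (by linarith)
  have hC0 : 0 < Real.cosh (Real.sqrt (-x) / 2) := Real.cosh_pos _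
  have hu := hasDerivAt_sqrt_neg hx
  have hS : HasDerivAt (fun y : ℝ => Real.sinh (Real.sqrt (-y) / 2))
      (Real.cosh (Real.sqrt (-x) / 2) * (1 / (2 * Real.sqrt (-x)) * (-1) / 2)) x :=
    (hu.div_const 2).sinh
  have hC : HasDerivAt (fun y : ℝ => Real.cosh (Real.sqrt (-y) / 2))
      (Real.sinh (Real.sqrt (-x) / 2) * (1 / (2 * Real.sqrt (-x)) * (-1) / 2)) x :=
    (hu.div_const 2).cosh
  have hN := ((hS.mul hC).const_mul 2).add hu
  have hD := (hu.mul (hC.pow 2)).const_mul 4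
  have hD0 : 4 * (Real.sqrt (-x) * Real.cosh (Real.sqrt (-x) / 2) ^ 2) ≠ 0 := by positivity
  have hF := ((hN.div hD hD0).neg : HasDerivAt (fun y : ℝ =>
    -((2 * (Real.sinh (Real.sqrt (-y) / 2) * Real.cosh (Real.sqrt (-y) / 2)) + Real.sqrt (-y)) /
      (4 * (Real.sqrt (-y) * Real.cosh (Real.sqrt (-y) / 2) ^ 2)))) _ x)
  have hFL' : HasDerivAt FL' _ x := hF
  convert hFL' using 1
  have hid := Real.cosh_sq (Real.sqrt (-x) / 2)
  rw [FL2]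
  simp only [Pi.mul_apply, Pi.add_apply, Pi.pow_apply]
  field_simp
  linear_combination (-16 * Real.sqrt (-x) * Real.cosh (Real.sqrt (-x)/2)^2) * hid

noncomputable def FR (x : ℝ) : ℝ :=
  -(Real.sqrt x * Real.sin (Real.sqrt x / 2)) / Real.cos (Real.sqrt x / 2)

noncomputable def FR' (x : ℝ) : ℝ :=
  -((2 * (Real.sin (Real.sqrt x / 2) * Real.cos (Real.sqrt x / 2)) + Real.sqrt x) /
    (4 * (Real.sqrt x * Real.cos (Real.sqrt x / 2) ^ 2)))

noncomputable def FR2 (x : ℝ) : ℝ :=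
  -((Real.sqrt x * Real.cos (Real.sqrt x / 2)
      - 2 * (Real.sin (Real.sqrt x / 2) * Real.cos (Real.sqrt x / 2) ^ 2)
      + Real.sqrt x ^ 2 * Real.sin (Real.sqrt x / 2)) /
    (8 * (Real.sqrt x ^ 3 * Real.cos (Real.sqrt x / 2) ^ 3)))

lemma cos_sqrt_pos {x : ℝ} (hx : 0 ≤ x) (hx2 : x < Real.pi ^ 2) :
    0 < Real.cos (Real.sqrt x / 2) := by
  have hv : Real.sqrt x < Real.pi := by
    rw [show Real.pi = Real.sqrt (Real.pi ^ 2) by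
      rw [Real.sqrt_sq Real.pi_pos.le]]
    exact Real.sqrt_lt_sqrt hx hx2
  have hv0 : 0 ≤ Real.sqrt x := Real.sqrt_nonneg x
  apply Real.cos_pos_of_mem_Ioo
  constructor <;> [linarith [Real.pi_pos]; linarith]

lemma hasDerivAt_FR {x : ℝ} (hx : 0 < x) (hx2 : x < Real.pi ^ 2) :
    HasDerivAt FR (FR' x) x := by
  have hu0 : 0 < Real.sqrt x := Real.sqrt_pos.2 hx
  have hc0 : 0 < Real.cos (Real.sqrt x / 2) := cos_sqrt_pos hx.le hx2
  have hv : HasDerivAt (fun y : ℝ => Real.sqrt y) (1 / (2 * Real.sqrt x)) x :=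
    Real.hasDerivAt_sqrt hx.ne'
  have hs : HasDerivAt (fun y : ℝ => Real.sin (Real.sqrt y / 2))
      (Real.cos (Real.sqrt x / 2) * (1 / (2 * Real.sqrt x) / 2)) x := (hv.div_const 2).sin
  have hc : HasDerivAt (fun y : ℝ => Real.cos (Real.sqrt y / 2))
      (-Real.sin (Real.sqrt x / 2) * (1 / (2 * Real.sqrt x) / 2)) x := (hv.div_const 2).cos
  have hF := ((hv.mul hs).neg).div hc hc0.ne'
  have hF' : HasDerivAt FR _ x := hF
  convert hF' using 1
  have hid := Real.sin_sq_add_cos_sq (Real.sqrt x / 2)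
  rw [FR']
  simp only [Pi.mul_apply, Pi.neg_apply]
  field_simp
  linear_combination (4 * Real.sqrt x) * hid

lemma hasDerivAt_FR' {x : ℝ} (hx : 0 < x) (hx2 : x < Real.pi ^ 2) :
    HasDerivAt FR' (FR2 x) x := by
  have hu0 : 0 < Real.sqrt x := Real.sqrt_pos.2 hx
  have hc0 : 0 < Real.cos (Real.sqrt x / 2) := cos_sqrt_pos hx.le hx2
  have hv : HasDerivAt (fun y : ℝ => Real.sqrt y) (1 / (2 * Real.sqrt x)) x :=
    Real.hasDerivAt_sqrt hx.ne'
  have hs : HasDerivAt (fun y : ℝ => Real.sin (Real.sqrt y / 2))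
      (Real.cos (Real.sqrt x / 2) * (1 / (2 * Real.sqrt x) / 2)) x := (hv.div_const 2).sin
  have hc : HasDerivAt (fun y : ℝ => Real.cos (Real.sqrt y / 2))
      (-Real.sin (Real.sqrt x / 2) * (1 / (2 * Real.sqrt x) / 2)) x := (hv.div_const 2).cos
  have hN := ((hs.mul hc).const_mul 2).add hv
  have hD := (hv.mul (hc.pow 2)).const_mul 4
  have hD0 : 4 * (Real.sqrt x * Real.cos (Real.sqrt x / 2) ^ 2) ≠ 0 := by positivity
  have hF := (hN.div hD hD0).neg
  have hF' : HasDerivAt FR' _ x := hF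
  convert hF' using 1
  have hid := Real.sin_sq_add_cos_sq (Real.sqrt x / 2)
  rw [FR2]
  simp only [Pi.mul_apply, Pi.add_apply, Pi.pow_apply]
  have hsq : Real.sqrt x ^ 2 = x := Real.sq_sqrt hx.le
  field_simp
  linear_combination (16 * Real.sqrt x * Real.cos (Real.sqrt x/2)^2) * hid

lemma FL2_nonpos {x : ℝ} (hx : x < 0) : FL2 x ≤ 0 := by
  set u := Real.sqrt (-x) with hu
  set S := Real.sinh (u / 2) with hS
  set C := Real.cosh (u / 2) with hC
  have hu0 : 0 < u := Real.sqrt_pos.2 (by linarith)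
  have hC1 : 1 ≤ C := Real.one_le_cosh _
  have hS0 : 0 ≤ S := Real.sinh_nonneg_iff.mpr (by positivity)
  have huS : u ≤ 2 * S := by
    have := Real.self_le_sinh_iff.mpr (by positivity : (0:ℝ) ≤ u / 2)
    linarith
  have hnum : 0 ≤ 2 * (S * C ^ 2) - u * C + u ^ 2 * S := by
    nlinarith [mul_nonneg (mul_nonneg (by linarith : (0:ℝ) ≤ 2*S - u) (by linarith : (0:ℝ) ≤ C)) (by linarith : (0:ℝ) ≤ C),
      mul_nonneg (mul_nonneg hu0.le (by linarith : (0:ℝ) ≤ C)) (by linarith : (0:ℝ) ≤ C - 1),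
      mul_nonneg (mul_nonneg hu0.le hu0.le) hS0]
  have hden : (0:ℝ) < 8 * (u ^ 3 * C ^ 3) := by positivity
  rw [FL2]
  exact neg_nonpos.mpr (div_nonneg hnum hden.le)

lemma one_le_cos_add_mul_sin {y : ℝ} (hy : 0 < y) (hy2 : y < Real.pi / 2) :
    1 ≤ Real.cos y + 2 * y * Real.sin y := by
  have hpi := Real.pi_pos
  have h2 : Real.cos y = 1 - 2 * Real.sin (y / 2) ^ 2 := by
    have h := Real.cos_two_mul (y / 2)
    rw [show 2 * (y / 2) = y by ring] at h
    have hp := Real.sin_sq_add_cos_sq (y / 2)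
    linarith
  have hsin : Real.sin y = 2 * (Real.sin (y / 2) * Real.cos (y / 2)) := by
    have h := Real.sin_two_mul (y / 2)
    rw [show 2 * (y / 2) = y by ring] at h
    linarith
  have hs0 : 0 ≤ Real.sin (y / 2) := Real.sin_nonneg_of_nonneg_of_le_pi (by linarith) (by linarith)
  have hsx : Real.sin (y / 2) ≤ y / 2 := (Real.sin_lt (by linarith)).le
  have hcos : (1:ℝ) / 2 ≤ Real.cos (y / 2) := by
    have := Real.cos_le_cos_of_nonneg_of_le_pi (by linarith : (0:ℝ) ≤ y / 2)
      (by linarith : Real.pi / 3 ≤ Real.pi) (by linarith : y / 2 ≤ Real.pi / 3)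
    rw [Real.cos_pi_div_three] at this
    linarith
  rw [h2, hsin]
  nlinarith [mul_le_mul_of_nonneg_right hsx hs0,
    mul_le_mul_of_nonneg_left hcos (mul_nonneg hy.le hs0)]

lemma FR2_nonpos {x : ℝ} (hx : 0 < x) (hx2 : x < Real.pi ^ 2) : FR2 x ≤ 0 := by
  set v := Real.sqrt x with hv
  set s := Real.sin (v / 2) with hs
  set c := Real.cos (v / 2) with hc
  have hv0 : 0 < v := Real.sqrt_pos.2 hx
  have hvpi : v < Real.pi := by
    rw [hv, show Real.pi = Real.sqrt (Real.pi ^ 2) by rw [Real.sqrt_sq Real.pi_pos.le]]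
    exact Real.sqrt_lt_sqrt hx.le hx2
  have hc0 : 0 < c := cos_sqrt_pos hx.le hx2
  have hc1 : c ≤ 1 := Real.cos_le_one _
  have hs0 : 0 ≤ s := Real.sin_nonneg_of_nonneg_of_le_pi (by linarith) (by linarith [Real.pi_pos])
  have hsv : s ≤ v / 2 := (Real.sin_lt (by linarith)).le
  have key2 : 1 ≤ c + v * s := by
    have := one_le_cos_add_mul_sin (by linarith : 0 < v / 2) (by linarith : v / 2 < Real.pi / 2)
    rw [← hs, ← hc] at this
    linarith
  have hnum : 0 ≤ v * c - 2 * (s * c ^ 2) + v ^ 2 * s := by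
    nlinarith [mul_nonneg hv0.le (by linarith : (0:ℝ) ≤ c + v * s - 1),
      mul_le_mul_of_nonneg_right (mul_le_one₀ hc1 hc0.le hc1) hs0]
  have hden : (0:ℝ) < 8 * (v ^ 3 * c ^ 3) := by positivity
  rw [FR2]
  exact neg_nonpos.mpr (div_nonneg hnum hden.le)

lemma concaveOn_FL : ConcaveOn ℝ (Set.Iic 0) FL := by
  apply concaveOn_of_hasDerivWithinAt2_nonpos (f' := FL') (f'' := FL2) (convex_Iic 0)
  · apply Continuous.continuousOn
    apply Continuous.div
    · exact (Real.continuous_sqrt.comp continuous_neg).mul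
        (Real.continuous_sinh.comp ((Real.continuous_sqrt.comp continuous_neg).div_const 2))
    · exact Real.continuous_cosh.comp ((Real.continuous_sqrt.comp continuous_neg).div_const 2)
    · exact fun y => (Real.cosh_pos _).ne'
  · intro y hy
    rw [interior_Iic] at hy
    exact (hasDerivAt_FL hy).hasDerivWithinAt
  · intro y hy
    rw [interior_Iic] at hy
    exact (hasDerivAt_FL' hy).hasDerivWithinAt
  · intro y hy
    rw [interior_Iic] at hy
    exact FL2_nonpos hy

lemma concaveOn_FR : ConcaveOn ℝ (Set.Ico 0 (Real.pi ^ 2)) FR := by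
  apply concaveOn_of_hasDerivWithinAt2_nonpos (f' := FR') (f'' := FR2) (convex_Ico 0 _)
  · apply ContinuousOn.div
    · exact ((Real.continuous_sqrt.mul
        (Real.continuous_sin.comp (Real.continuous_sqrt.div_const 2))).neg).continuousOn
    · exact (Real.continuous_cos.comp (Real.continuous_sqrt.div_const 2)).continuousOn
    · exact fun y hy => (cos_sqrt_pos hy.1 hy.2).ne'
  · intro y hy
    rw [interior_Ico] at hy
    exact (hasDerivAt_FR hy.1 hy.2).hasDerivWithinAt
  · intro y hy
    rw [interior_Ico] at hy
    exact (hasDerivAt_FR' hy.1 hy.2).hasDerivWithinAt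
  · intro y hy
    rw [interior_Ico] at hy
    exact FR2_nonpos hy.1 hy.2

lemma fs_eq_FL {x : ℝ} (hx : x ≤ 0) : fs x = FL x := by
  rcases hx.lt_or_eq with h | h
  · rw [fs, if_pos h, FL, Real.tanh_eq_sinh_div_cosh, mul_div_assoc]
  · subst h
    simp [fs, FL]

lemma fs_eq_FR {x : ℝ} (hx : 0 ≤ x) : fs x = FR x := by
  rcases hx.lt_or_eq with h | h
  · rw [fs, if_neg (not_lt.2 hx), if_neg h.ne', FR, Real.tan_eq_sin_div_cos]
    ring
  · rw [← h]
    simp [fs, FR]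

lemma sinh_le_mul_cosh {y : ℝ} (hy : 0 ≤ y) : Real.sinh y ≤ y * Real.cosh y := by
  set g : ℝ → ℝ := fun z => z * Real.cosh z - Real.sinh z with hg
  have hd : ∀ z : ℝ, HasDerivAt g (z * Real.sinh z) z := by
    intro z
    have h1 := ((hasDerivAt_id z).mul (Real.hasDerivAt_cosh z)).sub (Real.hasDerivAt_sinh z)
    have h1' : HasDerivAt g _ z := h1
    convert h1' using 1
    simp only [id_eq]
    ring
  have hmono : MonotoneOn g (Set.Ici 0) := by
    apply monotoneOn_of_deriv_nonneg (convex_Ici 0)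
    · exact (Continuous.sub (continuous_id.mul Real.continuous_cosh) Real.continuous_sinh).continuousOn
    · exact fun z _ => (hd z).differentiableAt.differentiableWithinAt
    · intro z hz
      rw [interior_Ici] at hz
      rw [(hd z).deriv]
      exact mul_nonneg hz.le (Real.sinh_nonneg_iff.mpr hz.le)
  have := hmono (Set.self_mem_Ici) hy hy
  simp [hg] at this
  linarith

lemma fs_le_line {x : ℝ} (hx : x < Real.pi ^ 2) : fs x ≤ -x / 2 := by
  rcases lt_trichotomy x 0 with h | h | h
  · rw [fs, if_pos h]
    set u := Real.sqrt (-x) with hu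
    have hu0 : 0 < u := Real.sqrt_pos.2 (by linarith)
    have husq : u ^ 2 = -x := Real.sq_sqrt (by linarith)
    have htanh : Real.tanh (u / 2) ≤ u / 2 := by
      rw [Real.tanh_eq_sinh_div_cosh]
      rw [div_le_iff₀ (Real.cosh_pos _)]
      exact sinh_le_mul_cosh (by positivity)
    nlinarith [mul_le_mul_of_nonneg_left htanh hu0.le]
  · rw [h]
    simp [fs]
  · rw [fs, if_neg (by linarith), if_neg h.ne']
    set v := Real.sqrt x with hv
    have hv0 : 0 < v := Real.sqrt_pos.2 h
    have hvsq : v ^ 2 = x := Real.sq_sqrt h.le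
    have hvpi : v < Real.pi := by
      rw [hv, show Real.pi = Real.sqrt (Real.pi ^ 2) by rw [Real.sqrt_sq Real.pi_pos.le]]
      exact Real.sqrt_lt_sqrt h.le hx
    have htan : v / 2 ≤ Real.tan (v / 2) :=
      (Real.lt_tan (by linarith) (by linarith)).le
    nlinarith [mul_le_mul_of_nonneg_left htan hv0.le]

lemma fs_zero : fs 0 = 0 := by simp [fs]

lemma concave_left {a b t : ℝ} (ha : a ≤ 0) (hb : b ≤ 0) (ht0 : 0 ≤ t) (ht1 : t ≤ 1) :
    t * fs a + (1 - t) * fs b ≤ fs (t * a + (1 - t) * b) := by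
  have hmem : t * a + (1 - t) * b ≤ 0 := by nlinarith
  rw [fs_eq_FL ha, fs_eq_FL hb, fs_eq_FL hmem]
  have := concaveOn_FL.2 (Set.mem_Iic.2 ha) (Set.mem_Iic.2 hb) ht0
    (show (0:ℝ) ≤ 1 - t by linarith) (show t + (1 - t) = 1 by ring)
  simpa [smul_eq_mul] using this

lemma concave_right {a b t : ℝ} (ha : 0 ≤ a) (ha2 : a < Real.pi ^ 2)
    (hb : 0 ≤ b) (hb2 : b < Real.pi ^ 2) (ht0 : 0 ≤ t) (ht1 : t ≤ 1) :
    t * fs a + (1 - t) * fs b ≤ fs (t * a + (1 - t) * b) := by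
  have hmem0 : 0 ≤ t * a + (1 - t) * b :=
    add_nonneg (mul_nonneg ht0 ha) (mul_nonneg (by linarith) hb)
  rw [fs_eq_FR ha, fs_eq_FR hb, fs_eq_FR hmem0]
  have := concaveOn_FR.2 (Set.mem_Ico.2 ⟨ha, ha2⟩) (Set.mem_Ico.2 ⟨hb, hb2⟩) ht0
    (show (0:ℝ) ≤ 1 - t by linarith) (show t + (1 - t) = 1 by ring)
  simpa [smul_eq_mul] using this

/-- Mixed case: `a < 0 < b`. -/
lemma concave_mixed {a b t : ℝ} (ha : a < 0) (hb : 0 < b) (hb2 : b < Real.pi ^ 2)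
    (ht0 : 0 ≤ t) (ht1 : t ≤ 1) :
    t * fs a + (1 - t) * fs b ≤ fs (t * a + (1 - t) * b) := by
  set P := t * a + (1 - t) * b with hP
  have hcha : fs a ≤ -a / 2 := fs_le_line (by nlinarith [Real.pi_pos] : a < Real.pi ^ 2)
  have hchb : fs b ≤ -b / 2 := fs_le_line hb2
  rcases le_or_gt P 0 with hP0 | hP0
  · -- use the left branch between a and 0
    set s := P / a with hs
    have hsa : s * a = P := div_mul_cancel₀ P ha.ne
    have hs0 : 0 ≤ s := by
      rw [hs, div_nonneg_iff]
      right
      exact ⟨hP0, ha.le⟩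
    have hs1 : s ≤ 1 := by
      have hPa : a ≤ P := by nlinarith
      rw [hs, div_le_one_iff]
      right; right
      exact ⟨ha, hPa⟩
    have hc := concave_left (le_refl (0:ℝ)) ha.le (by linarith : 0 ≤ 1 - s) (by linarith)
    rw [fs_zero] at hc
    have hc' : s * fs a ≤ fs P := by
      have : (1 - (1 - s)) = s := by ring
      calc s * fs a = (1 - s) * 0 + (1 - (1 - s)) * fs a := by ring
        _ ≤ fs ((1 - s) * 0 + (1 - (1 - s)) * a) := hc
        _ = fs P := by rw [show (1 - s) * 0 + (1 - (1 - s)) * a = s * a by ring, hsa]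
    have hst : (s - t) * a = (1 - t) * b := by
      have : s * a = t * a + (1 - t) * b := hsa
      linarith
    have hst0 : s - t ≤ 0 := by nlinarith
    have h1 : (s - t) * fs a ≥ (s - t) * (-a / 2) := by
      exact mul_le_mul_of_nonpos_left hcha hst0
    have h2 : (1 - t) * fs b ≤ (1 - t) * (-b / 2) :=
      mul_le_mul_of_nonneg_left hchb (by linarith)
    nlinarith [h1, h2, hst]
  · -- use the right branch between 0 and b
    set s := P / b with hs
    have hsb : s * b = P := div_mul_cancel₀ P hb.ne'
    have hs0 : 0 ≤ s := div_nonneg hP0.le hb.le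
    have hs1 : s ≤ 1 := by
      have hPb : P ≤ b := by nlinarith
      rw [hs, div_le_one hb]
      exact hPb
    have hc := concave_right (le_refl (0:ℝ)) (by positivity) hb.le hb2
      (by linarith : 0 ≤ 1 - s) (by linarith)
    rw [fs_zero] at hc
    have hc' : s * fs b ≤ fs P := by
      calc s * fs b = (1 - s) * 0 + (1 - (1 - s)) * fs b := by ring
        _ ≤ fs ((1 - s) * 0 + (1 - (1 - s)) * b) := hc
        _ = fs P := by rw [show (1 - s) * 0 + (1 - (1 - s)) * b = s * b by ring, hsb]
    have hst : (s - (1 - t)) * b = t * a := by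
      have : s * b = t * a + (1 - t) * b := hsb
      linarith
    have hst0 : s - (1 - t) ≤ 0 := by nlinarith
    have h1 : (s - (1 - t)) * fs b ≥ (s - (1 - t)) * (-b / 2) :=
      mul_le_mul_of_nonpos_left hchb hst0
    have h2 : t * fs a ≤ t * (-a / 2) := mul_le_mul_of_nonneg_left hcha ht0
    nlinarith [h1, h2, hst]

/-- The principal Dirichlet-to-Neumann eigenvalue branch `fs` of the unit interval is
concave on `(-∞, π²)`. -/
theorem stmt11 (Λ₁ Λ₂ : ℝ) (h1 : Λ₁ < Real.pi ^ 2) (h2 : Λ₂ < Real.pi ^ 2)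
    (t : ℝ) (ht : t ∈ Set.Icc (0 : ℝ) 1) :
    fs (t * Λ₁ + (1 - t) * Λ₂) ≥ t * fs Λ₁ + (1 - t) * fs Λ₂ := by
  obtain ⟨ht0, ht1⟩ := ht
  by_cases hc1 : Λ₁ ≤ 0 ∧ Λ₂ ≤ 0
  · exact concave_left hc1.1 hc1.2 ht0 ht1
  by_cases hc2 : 0 ≤ Λ₁ ∧ 0 ≤ Λ₂
  · exact concave_right hc2.1 h1 hc2.2 h2 ht0 ht1
  push_neg at hc1 hc2
  rcases le_or_gt Λ₁ 0 with hA | hA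
  · have hB : 0 < Λ₂ := hc1 hA
    rcases hA.lt_or_eq with hA' | hA'
    · exact concave_mixed hA' hB h2 ht0 ht1
    · exact absurd (hc2 (le_of_eq hA'.symm)) (not_lt.2 hB.le)
  · have hB : Λ₂ < 0 := hc2 hA.le
    have := concave_mixed hB hA h1 (by linarith : (0:ℝ) ≤ 1 - t) (by linarith : 1 - t ≤ 1)
    calc t * fs Λ₁ + (1 - t) * fs Λ₂
        = (1 - t) * fs Λ₂ + (1 - (1 - t)) * fs Λ₁ := by ring
      _ ≤ fs ((1 - t) * Λ₂ + (1 - (1 - t)) * Λ₁) := this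
      _ = fs (t * Λ₁ + (1 - t) * Λ₂) := by congr 1; ring
end
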